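/- Under the sketch-and-project setup, for every realization of the sketching matrices and every k ≥ λ − 1: σ_min(AB^{-1/2})⁴ ‖x_k − x*‖_B⁴ ≤ ι_k^λ ≤ M_{k−λ+1}⁴, where σ_min(AB^{-1/2}) is the smallest nonzero singular value of AB^{-1/2}. -/

import Mathlib

open MeasureTheory ProbabilityTheory Matrix Finset Filter

noncomputable section

/-- The Moore–Penrose pseudoinverse of a real matrix, defined via classical choice
as a matrix satisfying the four Penrose equations (such a matrix exists and is unique). -/
noncomputable def mpinv {a b : ℕ} (M : Matrix (Fin a) (Fin b) ℝ) : Matrix (Fin b) (Fin a) ℝ :=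
  Classical.epsilon fun X => M * X * M = M ∧ X * M * X = X ∧ (M * X)ᵀ = M * X ∧ (X * M)ᵀ = X * M

/-- The Euclidean norm of a vector in `Fin a → ℝ`. -/
noncomputable def nrm2 {a : ℕ} (v : Fin a → ℝ) : ℝ := Real.sqrt (∑ i, v i ^ 2)

/-- The spectral norm (ℓ₂ operator norm) of a matrix. -/
noncomputable def specNorm {a b : ℕ} (M : Matrix (Fin a) (Fin b) ℝ) : ℝ :=
  sInf {c | 0 ≤ c ∧ ∀ v, nrm2 (M *ᵥ v) ≤ c * nrm2 v}

/-- The row space of a matrix, as a submodule of `Fin b → ℝ`. -/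
def rowSpace {a b : ℕ} (M : Matrix (Fin a) (Fin b) ℝ) : Submodule ℝ (Fin b → ℝ) :=
  Submodule.span ℝ (Set.range M)

/-- The column space of a matrix, as a submodule of `Fin a → ℝ`. -/
def colSpace {a b : ℕ} (M : Matrix (Fin a) (Fin b) ℝ) : Submodule ℝ (Fin a → ℝ) :=
  rowSpace Mᵀ

/-- One step of the sketch-and-project iteration:
`x ↦ x − B⁻¹Aᵀ Sₖ (Sₖᵀ A B⁻¹ Aᵀ Sₖ)† Sₖᵀ (A x − b)`. -/
noncomputable def spStep {m n p : ℕ} (A : Matrix (Fin m) (Fin n) ℝ)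
    (B : Matrix (Fin n) (Fin n) ℝ) (b : Fin m → ℝ)
    (Sk : Matrix (Fin m) (Fin p) ℝ) (xk : Fin n → ℝ) : Fin n → ℝ :=
  xk - (B⁻¹ * Aᵀ * Sk * mpinv (Skᵀ * A * B⁻¹ * Aᵀ * Sk) * Skᵀ) *ᵥ (A *ᵥ xk - b)

instance matrixMeasurableSpace {a b : ℕ} : MeasurableSpace (Matrix (Fin a) (Fin b) ℝ) :=
  MeasurableSpace.pi

/-- The `(C, ω)` sub-exponential Johnson–Lindenstrauss property of a random `m × p` matrix. -/
def jlProperty {m p : ℕ} {Ω : Type*} [MeasurableSpace Ω] (μ : Measure Ω)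
    (S : Ω → Matrix (Fin m) (Fin p) ℝ) (C ω : ℝ) : Prop :=
  0 < C ∧ 0 < ω ∧ ∀ z : Fin m → ℝ,
    (∀ t : ℝ, |t| ≤ 1 / ω →
      ∫ a, Real.exp (t * (nrm2 ((S a)ᵀ *ᵥ z) ^ 2 - nrm2 z ^ 2)) ∂μ ≤
        Real.exp (t ^ 2 * nrm2 z ^ 4 / (2 * C * p))) ∧
    (∀ δ : ℝ, 0 < δ →
      μ {a | δ * nrm2 z ^ 2 < |nrm2 ((S a)ᵀ *ᵥ z) ^ 2 - nrm2 z ^ 2|} ≤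
        ENNReal.ofReal (2 * Real.exp (-min (C * p * δ ^ 2) (C * p * δ / ω))))

/-- `σ`-algebra generated by the sketching matrices `S₁, …, S_j`. -/
def sigmaF {m p : ℕ} {Ω : Type*} [MeasurableSpace Ω]
    (S : ℕ → Ω → Matrix (Fin m) (Fin p) ℝ) (j : ℕ) : MeasurableSpace Ω :=
  ⨆ i ∈ Finset.Icc 1 j, MeasurableSpace.comap (S i) inferInstance

/-- The smallest nonzero singular value of a matrix. -/
noncomputable def sigmaMinPos {a b : ℕ} (M : Matrix (Fin a) (Fin b) ℝ) : ℝ :=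
  sInf {c | ∃ v ∈ rowSpace M, v ≠ 0 ∧ c = nrm2 (M *ᵥ v) / nrm2 v}


/-! ### Auxiliary lemmas -/

lemma nrm2_nonneg {a : ℕ} (v : Fin a → ℝ) : 0 ≤ nrm2 v := Real.sqrt_nonneg _

lemma nrm2_sq' {a : ℕ} (v : Fin a → ℝ) : nrm2 v ^ 2 = v ⬝ᵥ v := by
  rw [nrm2, Real.sq_sqrt (Finset.sum_nonneg fun i _ => sq_nonneg _)]
  simp [dotProduct, sq]

lemma nrm2_le_iff' {a b : ℕ} {u : Fin a → ℝ} {v : Fin b → ℝ} :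
    nrm2 u ≤ nrm2 v ↔ u ⬝ᵥ u ≤ v ⬝ᵥ v := by
  rw [← nrm2_sq', ← nrm2_sq']
  exact (pow_le_pow_iff_left₀ (nrm2_nonneg u) (nrm2_nonneg v) (by norm_num)).symm

lemma nrm2_zero_iff' {a : ℕ} {v : Fin a → ℝ} : nrm2 v = 0 ↔ v = 0 := by
  rw [nrm2, Real.sqrt_eq_zero (Finset.sum_nonneg fun i _ => sq_nonneg _)]
  constructor
  · intro h
    funext i
    have := (Finset.sum_eq_zero_iff_of_nonneg (fun i _ => sq_nonneg (v i))).mp h i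
      (Finset.mem_univ i)
    exact pow_eq_zero_iff (by norm_num) |>.mp this
  · intro h; subst h; simp

lemma real_transpose_eq_star {q : ℕ} (Z : Matrix (Fin q) (Fin q) ℝ) : Zᵀ = star Z := by
  rw [Matrix.star_eq_conjTranspose, Matrix.conjTranspose_eq_transpose_of_trivial]

/-- Existence of a Moore-Penrose pseudoinverse for a real symmetric matrix. -/
lemma exists_mp {q : ℕ} (M : Matrix (Fin q) (Fin q) ℝ) (hM : Mᵀ = M) :
    ∃ X : Matrix (Fin q) (Fin q) ℝ,
      M * X * M = M ∧ X * M * X = X ∧ (M * X)ᵀ = M * X ∧ (X * M)ᵀ = X * M := by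
  have hherm : M.IsHermitian := by
    rwa [Matrix.IsHermitian, Matrix.conjTranspose_eq_transpose_of_trivial]
  set U : Matrix (Fin q) (Fin q) ℝ := (hherm.eigenvectorUnitary : Matrix (Fin q) (Fin q) ℝ)
    with hU
  set d : Fin q → ℝ := hherm.eigenvalues with hd
  have hspec : M = U * diagonal d * star U := by
    have := hherm.spectral_theorem
    simpa using this
  have hUU : star U * U = 1 := Unitary.coe_star_mul_self hherm.eigenvectorUnitary
  obtain ⟨d', hdd'd, hd'dd'⟩ : ∃ d' : Fin q → ℝ,
      (fun i => d i * d' i * d i) = d ∧ (fun i => d' i * d i * d' i) = d' := by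
    refine ⟨fun i => if d i = 0 then 0 else (d i)⁻¹, ?_, ?_⟩ <;>
      funext i <;> by_cases h : d i = 0 <;>
        simp [h] <;> field_simp
  have hcomm : (fun i => d' i * d i) = fun i => d i * d' i :=
    funext fun i => mul_comm _ _
  have hstar_diag : ∀ f : Fin q → ℝ, star (diagonal f) = diagonal f := fun f => by
    rw [← real_transpose_eq_star, Matrix.diagonal_transpose]
  have hsandwich : ∀ E F : Matrix (Fin q) (Fin q) ℝ,
      (U * E * star U) * (U * F * star U) = U * (E * F) * star U := by
    intro E F
    calc (U * E * star U) * (U * F * star U) = U * (E * ((star U * U) * F)) * star U := by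
          noncomm_ring
      _ = U * (E * F) * star U := by rw [hUU]; noncomm_ring
  refine ⟨U * diagonal d' * star U, ?_, ?_, ?_, ?_⟩
  · rw [hspec, hsandwich, hsandwich, diagonal_mul_diagonal, diagonal_mul_diagonal]
    exact congrArg (fun E => U * E * star U) (congrArg diagonal hdd'd)
  · rw [hspec, hsandwich, hsandwich, diagonal_mul_diagonal, diagonal_mul_diagonal]
    exact congrArg (fun E => U * E * star U) (congrArg diagonal hd'dd')
  · rw [hspec, hsandwich, real_transpose_eq_star]
    simp only [StarMul.star_mul, star_star, hstar_diag]
    rw [diagonal_mul_diagonal, diagonal_mul_diagonal, hcomm]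
    noncomm_ring
  · rw [hspec, hsandwich, real_transpose_eq_star]
    simp only [StarMul.star_mul, star_star, hstar_diag]
    rw [diagonal_mul_diagonal, diagonal_mul_diagonal, hcomm]
    noncomm_ring

/-- Uniqueness of the Moore-Penrose pseudoinverse. -/
lemma mp_unique {q : ℕ} (M X Y : Matrix (Fin q) (Fin q) ℝ)
    (hX1 : M * X * M = M) (hX2 : X * M * X = X) (hX3 : (M * X)ᵀ = M * X)
    (hX4 : (X * M)ᵀ = X * M)
    (hY1 : M * Y * M = M) (hY2 : Y * M * Y = Y) (hY3 : (M * Y)ᵀ = M * Y)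
    (hY4 : (Y * M)ᵀ = Y * M) :
    X = Y := by
  have h1 : X = X * Xᵀ * Mᵀ := by
    calc X = X * (M * X) := by rw [← mul_assoc, hX2]
      _ = X * (M * X)ᵀ := by rw [hX3]
      _ = X * Xᵀ * Mᵀ := by rw [transpose_mul, mul_assoc]
  have h2 : Mᵀ = Mᵀ * Yᵀ * Mᵀ := by
    conv_lhs => rw [← hY1]
    rw [transpose_mul, transpose_mul, mul_assoc]
  have hXY : X = X * M * Y := by
    calc X = X * Xᵀ * Mᵀ := h1
      _ = X * Xᵀ * (Mᵀ * Yᵀ * Mᵀ) := by rw [← h2]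
      _ = (X * Xᵀ * Mᵀ) * (Yᵀ * Mᵀ) := by noncomm_ring
      _ = X * (Yᵀ * Mᵀ) := by rw [← h1]
      _ = X * (M * Y)ᵀ := by rw [transpose_mul]
      _ = X * (M * Y) := by rw [hY3]
      _ = X * M * Y := by rw [mul_assoc]
  have g1 : Y = Mᵀ * Yᵀ * Y := by
    calc Y = (Y * M) * Y := by rw [hY2]
      _ = (Y * M)ᵀ * Y := by rw [hY4]
      _ = Mᵀ * Yᵀ * Y := by rw [transpose_mul]
  have g2 : Mᵀ = Mᵀ * Xᵀ * Mᵀ := by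
    conv_lhs => rw [← hX1]
    rw [transpose_mul, transpose_mul, mul_assoc]
  have gXY : Y = X * M * Y := by
    calc Y = Mᵀ * Yᵀ * Y := g1
      _ = (Mᵀ * Xᵀ * Mᵀ) * Yᵀ * Y := by rw [← g2]
      _ = (Mᵀ * Xᵀ) * (Mᵀ * Yᵀ * Y) := by noncomm_ring
      _ = (Mᵀ * Xᵀ) * Y := by rw [← g1]
      _ = (X * M)ᵀ * Y := by rw [transpose_mul]
      _ = X * M * Y := by rw [hX4]
  rw [hXY, ← gXY]

lemma mpinv_spec {q : ℕ} (M : Matrix (Fin q) (Fin q) ℝ) (hM : Mᵀ = M) :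
    M * mpinv M * M = M ∧ mpinv M * M * mpinv M = mpinv M ∧
      (M * mpinv M)ᵀ = M * mpinv M ∧ (mpinv M * M)ᵀ = mpinv M * M :=
  Classical.epsilon_spec (exists_mp M hM)

lemma mpinv_symm {q : ℕ} (M : Matrix (Fin q) (Fin q) ℝ) (hM : Mᵀ = M) :
    (mpinv M)ᵀ = mpinv M := by
  obtain ⟨h1, h2, h3, h4⟩ := mpinv_spec M hM
  set X := mpinv M with hX
  have e : M * Xᵀ = X * M := by
    conv_lhs => rw [← hM]
    rw [← transpose_mul, h4]
  have e' : Xᵀ * M = M * X := by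
    conv_lhs => rw [← hM]
    rw [← transpose_mul, h3]
  have hT1 : M * Xᵀ * M = M := by
    have := congrArg Matrix.transpose h1
    rwa [transpose_mul, transpose_mul, hM, ← mul_assoc] at this
  have hT2 : Xᵀ * M * Xᵀ = Xᵀ := by
    have := congrArg Matrix.transpose h2
    rwa [transpose_mul, transpose_mul, hM, ← mul_assoc] at this
  have hT3 : (M * Xᵀ)ᵀ = M * Xᵀ := by rw [e]; exact h4
  have hT4 : (Xᵀ * M)ᵀ = Xᵀ * M := by rw [e']; exact h3
  exact (mp_unique M X Xᵀ h1 h2 h3 h4 hT1 hT2 hT3 hT4).symm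

lemma contraction {q : ℕ} (P : Matrix (Fin q) (Fin q) ℝ) (hPT : Pᵀ = P) (hPP : P * P = P)
    (y : Fin q → ℝ) : nrm2 (y - P *ᵥ y) ≤ nrm2 y := by
  rw [nrm2_le_iff']
  have key : (P *ᵥ y) ⬝ᵥ (P *ᵥ y) = y ⬝ᵥ (P *ᵥ y) := by
    rw [Matrix.dotProduct_mulVec, ← Matrix.mulVec_transpose, hPT, Matrix.mulVec_mulVec, hPP,
      dotProduct_comm]
  have comm : y ⬝ᵥ (P *ᵥ y) = (P *ᵥ y) ⬝ᵥ y := dotProduct_comm _ _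
  have expand : (y - P *ᵥ y) ⬝ᵥ (y - P *ᵥ y)
      = y ⬝ᵥ y - y ⬝ᵥ (P *ᵥ y) - ((P *ᵥ y) ⬝ᵥ y - (P *ᵥ y) ⬝ᵥ (P *ᵥ y)) := by
    rw [sub_dotProduct, dotProduct_sub, dotProduct_sub]
  have h0 : 0 ≤ (P *ᵥ y) ⬝ᵥ (P *ᵥ y) := Finset.sum_nonneg fun i _ => mul_self_nonneg _
  rw [expand]
  linarith [key, comm, h0]

lemma proj_lemma {nn pp : ℕ} (D : Matrix (Fin pp) (Fin nn) ℝ) (X : Matrix (Fin pp) (Fin pp) ℝ)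
    (hX2 : X * (D * Dᵀ) * X = X) (hXT : Xᵀ = X) :
    (Dᵀ * X * D)ᵀ = Dᵀ * X * D ∧ (Dᵀ * X * D) * (Dᵀ * X * D) = Dᵀ * X * D := by
  constructor
  · rw [transpose_mul, transpose_mul, transpose_transpose, hXT, ← Matrix.mul_assoc]
  · have h : (Dᵀ * X * D) * (Dᵀ * X * D) = Dᵀ * ((X * (D * Dᵀ) * X) * D) := by
      simp only [Matrix.mul_assoc]
    rw [h, hX2, ← Matrix.mul_assoc]

lemma specNorm_set_nonempty {a b : ℕ} (M : Matrix (Fin a) (Fin b) ℝ) :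
    {c | 0 ≤ c ∧ ∀ v, nrm2 (M *ᵥ v) ≤ c * nrm2 v}.Nonempty := by
  refine ⟨Real.sqrt (∑ i, ∑ j, M i j ^ 2), Real.sqrt_nonneg _, fun v => ?_⟩
  have hnn : 0 ≤ ∑ i, ∑ j, M i j ^ 2 :=
    Finset.sum_nonneg fun i _ => Finset.sum_nonneg fun j _ => sq_nonneg _
  rw [nrm2, nrm2, ← Real.sqrt_mul hnn]
  apply Real.sqrt_le_sqrt
  rw [Finset.sum_mul]
  apply Finset.sum_le_sum
  intro i _
  calc (M *ᵥ v) i ^ 2 = (∑ j, M i j * v j) ^ 2 := rfl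
    _ ≤ (∑ j, M i j ^ 2) * ∑ j, v j ^ 2 := Finset.sum_mul_sq_le_sq_mul_sq _ _ _

lemma specNorm_nonneg {a b : ℕ} (M : Matrix (Fin a) (Fin b) ℝ) : 0 ≤ specNorm M :=
  le_csInf (specNorm_set_nonempty M) fun _ hc => hc.1

lemma specNorm_bound {a b : ℕ} (M : Matrix (Fin a) (Fin b) ℝ) (v : Fin b → ℝ) :
    nrm2 (M *ᵥ v) ≤ specNorm M * nrm2 v := by
  by_cases hv : nrm2 v = 0
  · have hv' : v = 0 := nrm2_zero_iff'.mp hv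
    rw [hv', Matrix.mulVec_zero]
    rw [nrm2_zero_iff'.mpr rfl]
    exact mul_nonneg (specNorm_nonneg M) (nrm2_nonneg _)
  · have hvpos : 0 < nrm2 v := lt_of_le_of_ne (nrm2_nonneg v) (Ne.symm hv)
    rw [← div_le_iff₀ hvpos]
    refine le_csInf (specNorm_set_nonempty M) fun c hc => ?_
    rw [div_le_iff₀ hvpos]
    exact hc.2 v

lemma mem_rowSpace {a b : ℕ} (M : Matrix (Fin a) (Fin b) ℝ) (w : Fin a → ℝ) :
    Mᵀ *ᵥ w ∈ rowSpace M := by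
  have h : Mᵀ *ᵥ w = ∑ i, w i • M i := by
    funext j
    simp [Matrix.mulVec, dotProduct, Matrix.transpose_apply, Finset.sum_apply, mul_comm]
  rw [h]
  exact Submodule.sum_mem _ fun i _ =>
    Submodule.smul_mem _ _ (Submodule.subset_span ⟨i, rfl⟩)

lemma decomp {m n : ℕ} (A : Matrix (Fin m) (Fin n) ℝ) (B : Matrix (Fin n) (Fin n) ℝ)
    (hB : B.PosDef) (v : Fin n → ℝ) :
    ∃ u z, v = (B⁻¹ * Aᵀ) *ᵥ u + z ∧ A *ᵥ z = 0 := by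
  classical
  set L1 := LinearMap.range (Matrix.mulVecLin (B⁻¹ * Aᵀ)) with hL1
  set L2 := LinearMap.ker (Matrix.mulVecLin A) with hL2
  have hBdet : IsUnit B.det := hB.det_pos.ne'.isUnit
  have hBidet : IsUnit (B⁻¹).det := by
    rw [Matrix.det_nonsing_inv, Ring.inverse_eq_inv']
    exact isUnit_iff_ne_zero.mpr (inv_ne_zero hBdet.ne_zero)
  have hdisj : L1 ⊓ L2 = ⊥ := by
    rw [Submodule.eq_bot_iff]
    rintro w ⟨⟨u, hu⟩, (hw : A *ᵥ w = 0)⟩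
    by_contra hw0
    have hpos := hB.dotProduct_mulVec_pos hw0
    rw [star_trivial] at hpos
    have hBw : B *ᵥ w = Aᵀ *ᵥ u := by
      rw [← hu, Matrix.mulVecLin_apply, Matrix.mulVec_mulVec, ← Matrix.mul_assoc,
        Matrix.mul_nonsing_inv _ hBdet, Matrix.one_mul]
    rw [hBw, Matrix.dotProduct_mulVec, Matrix.vecMul_transpose, hw, zero_dotProduct]
      at hpos
    exact lt_irrefl 0 hpos
  have hrank1 : Module.finrank ℝ L1 = A.rank := by
    rw [hL1]
    change (B⁻¹ * Aᵀ).rank = A.rank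
    rw [Matrix.rank_mul_eq_right_of_isUnit_det _ _ hBidet, Matrix.rank_transpose]
  have hrank2 : A.rank + Module.finrank ℝ L2 = n := by
    have := LinearMap.finrank_range_add_finrank_ker (Matrix.mulVecLin A)
    rwa [Module.finrank_pi, Fintype.card_fin] at this
  have hsup : L1 ⊔ L2 = ⊤ := by
    apply Submodule.eq_top_of_finrank_eq
    have := Submodule.finrank_sup_add_finrank_inf_eq L1 L2
    rw [hdisj, finrank_bot] at this
    rw [Module.finrank_pi, Fintype.card_fin]
    omega
  have hv : v ∈ L1 ⊔ L2 := hsup.symm ▸ Submodule.mem_top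
  obtain ⟨w, hw, z, hz, hwz⟩ := Submodule.mem_sup.mp hv
  obtain ⟨u, hu⟩ := hw
  exact ⟨u, z, by rw [← hwz, ← hu]; rfl, hz⟩

/-- For every realization and every `k ≥ λ − 1`:
`σ_min(AB^{-1/2})⁴ ‖x_k − x*‖_B⁴ ≤ ι_k^λ ≤ M_{k−λ+1}⁴`, where `σ_min` is the smallest
nonzero singular value. -/
theorem stmt16 {m n p : ℕ} (A : Matrix (Fin m) (Fin n) ℝ) (b : Fin m → ℝ)
    (hconsistent : ∃ y, A *ᵥ y = b)
    (B Bhalf : Matrix (Fin n) (Fin n) ℝ) (hB : B.PosDef)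
    (hBsymm : Bhalfᵀ = Bhalf) (hBsq : Bhalf * Bhalf = B)
    (S : ℕ → Matrix (Fin m) (Fin p) ℝ)
    (x₀ : Fin n → ℝ) (x : ℕ → Fin n → ℝ)
    (hx0 : x 0 = x₀) (hxrec : ∀ k, x (k + 1) = spStep A B b (S (k + 1)) (x k))
    (xstar : Fin n → ℝ) (hsol : A *ᵥ xstar = b)
    (hproj : ∀ y, A *ᵥ y = b →
      nrm2 (Bhalf *ᵥ (x₀ - xstar)) ≤ nrm2 (Bhalf *ᵥ (x₀ - y)))
    (lam : ℕ) (hlam : 1 ≤ lam) (k : ℕ) (hk : lam ≤ k + 1) :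
    sigmaMinPos (A * Bhalf⁻¹) ^ 4 * nrm2 (Bhalf *ᵥ (x k - xstar)) ^ 4 ≤
      (1 / lam) * ∑ i ∈ Finset.Icc (k + 1 - lam) k, nrm2 (A *ᵥ x i - b) ^ 4 ∧
    (1 / lam) * ∑ i ∈ Finset.Icc (k + 1 - lam) k, nrm2 (A *ᵥ x i - b) ^ 4 ≤
      (specNorm (A * Bhalf⁻¹) * nrm2 (Bhalf *ᵥ (x (k + 1 - lam) - xstar))) ^ 4 := by
  classical
  have hdetB : IsUnit B.det := hB.det_pos.ne'.isUnit
  have hdetH : IsUnit Bhalf.det := by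
    have hh : Bhalf.det * Bhalf.det = B.det := by rw [← Matrix.det_mul, hBsq]
    rcases eq_or_ne Bhalf.det 0 with h | h
    · exfalso; rw [h, mul_zero] at hh; exact hdetB.ne_zero hh.symm
    · exact isUnit_iff_ne_zero.mpr h
  have hHHi : Bhalf * Bhalf⁻¹ = 1 := Matrix.mul_nonsing_inv _ hdetH
  have hHiH : Bhalf⁻¹ * Bhalf = 1 := Matrix.nonsing_inv_mul _ hdetH
  have hBinv : B⁻¹ = Bhalf⁻¹ * Bhalf⁻¹ := by rw [← hBsq, Matrix.mul_inv_rev]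
  have hHisymm : (Bhalf⁻¹)ᵀ = Bhalf⁻¹ := by rw [Matrix.transpose_nonsing_inv, hBsymm]
  set M : Matrix (Fin m) (Fin n) ℝ := A * Bhalf⁻¹ with hM
  set y : ℕ → Fin n → ℝ := fun i => Bhalf *ᵥ (x i - xstar) with hy
  have hyk : ∀ i, Bhalf *ᵥ (x i - xstar) = y i := fun i => rfl
  have hMT : Mᵀ = Bhalf⁻¹ * Aᵀ := by rw [hM, Matrix.transpose_mul, hHisymm]
  have hHB : Bhalf * B⁻¹ = Bhalf⁻¹ := by
    rw [hBinv, ← Matrix.mul_assoc, hHHi, Matrix.one_mul]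
  have hres : ∀ i, A *ᵥ x i - b = M *ᵥ y i := by
    intro i
    calc A *ᵥ x i - b = A *ᵥ (x i - xstar) := by rw [Matrix.mulVec_sub, hsol]
      _ = ((A * Bhalf⁻¹) * Bhalf) *ᵥ (x i - xstar) := by
            rw [Matrix.mul_assoc, hHiH, Matrix.mul_one]
      _ = M *ᵥ y i := by rw [← Matrix.mulVec_mulVec, ← hM, hyk]
  -- one step of the iteration, in `y`-coordinates
  have hstep : ∀ i, ∃ P : Matrix (Fin n) (Fin n) ℝ,
      Pᵀ = P ∧ P * P = P ∧ (∃ W : Matrix (Fin m) (Fin n) ℝ, P = Mᵀ * W) ∧ y (i + 1) = y i - P *ᵥ y i := by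
    intro i
    set Sk := S (i + 1) with hSk
    set D : Matrix (Fin p) (Fin n) ℝ := Skᵀ * A * Bhalf⁻¹ with hD
    set G := Skᵀ * A * B⁻¹ * Aᵀ * Sk with hG
    have hGD : G = D * Dᵀ := by
      rw [hG, hD, Matrix.transpose_mul, Matrix.transpose_mul, Matrix.transpose_transpose,
        hHisymm, hBinv]
      simp only [Matrix.mul_assoc]
    have hGsymm : Gᵀ = G := by
      rw [hGD, Matrix.transpose_mul, Matrix.transpose_transpose]
    set X := mpinv G with hX
    obtain ⟨h1, h2, h3, h4⟩ := mpinv_spec G hGsymm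
    have hXT : Xᵀ = X := mpinv_symm G hGsymm
    have hX2 : X * (D * Dᵀ) * X = X := by rw [← hGD]; exact h2
    obtain ⟨hPT, hPP⟩ := proj_lemma D X hX2 hXT
    refine ⟨Dᵀ * X * D, hPT, hPP, ⟨Sk * (X * D), ?_⟩, ?_⟩
    · rw [hMT, hD, Matrix.transpose_mul, Matrix.transpose_mul, Matrix.transpose_transpose,
        hHisymm]
      simp only [Matrix.mul_assoc]
    · have hW : Bhalf * (B⁻¹ * Aᵀ * Sk * X * Skᵀ) * M = Dᵀ * X * D := by
        rw [hD, Matrix.transpose_mul, Matrix.transpose_mul, Matrix.transpose_transpose,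
          hHisymm, hM, hBinv]
        simp only [Matrix.mul_assoc]
        rw [← Matrix.mul_assoc Bhalf Bhalf⁻¹, hHHi, Matrix.one_mul]
      have hxr := hxrec i
      rw [spStep] at hxr
      have : y (i + 1) = Bhalf *ᵥ (x (i + 1) - xstar) := rfl
      rw [this, hxr, hres i, ← hSk, ← hX]
      rw [sub_right_comm, Matrix.mulVec_sub, Matrix.mulVec_mulVec, Matrix.mulVec_mulVec,
        hW, hyk]
  have hmono : ∀ i j, i ≤ j → nrm2 (y j) ≤ nrm2 (y i) := by
    intro i j hij
    induction j, hij using Nat.le_induction with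
    | base => exact le_refl _
    | succ j hij ih =>
      obtain ⟨P, hPT, hPP, _, hrec⟩ := hstep j
      rw [hrec]
      exact (contraction P hPT hPP (y j)).trans ih
  have hmem : ∀ i, y i ∈ rowSpace M := by
    intro i
    induction i with
    | zero =>
      obtain ⟨u, z, huz, hz⟩ := decomp A B hB (x 0 - xstar)
      have hAz : A *ᵥ (xstar + z) = b := by rw [Matrix.mulVec_add, hsol, hz, add_zero]
      have hpr := hproj (xstar + z) hAz
      rw [← hx0] at hpr
      have e1 : Bhalf *ᵥ (x 0 - xstar) = (Bhalf⁻¹ * Aᵀ) *ᵥ u + Bhalf *ᵥ z := by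
        rw [huz, Matrix.mulVec_add, Matrix.mulVec_mulVec, ← Matrix.mul_assoc, hHB]
      have e2 : Bhalf *ᵥ (x 0 - (xstar + z)) = (Bhalf⁻¹ * Aᵀ) *ᵥ u := by
        have h : x 0 - (xstar + z) = (B⁻¹ * Aᵀ) *ᵥ u := by
          rw [sub_add_eq_sub_sub, huz, add_sub_cancel_right]
        rw [h, Matrix.mulVec_mulVec, ← Matrix.mul_assoc, hHB]
      set a := (Bhalf⁻¹ * Aᵀ) *ᵥ u with ha
      have horth : a ⬝ᵥ (Bhalf *ᵥ z) = 0 := by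
        rw [Matrix.dotProduct_mulVec]
        have h : a ᵥ* Bhalf = Aᵀ *ᵥ u := by
          rw [← Matrix.mulVec_transpose, hBsymm, ha, Matrix.mulVec_mulVec, ← Matrix.mul_assoc,
            hHHi, Matrix.one_mul]
        rw [h, Matrix.mulVec_transpose, ← Matrix.dotProduct_mulVec, hz, dotProduct_zero]
      have hHz : Bhalf *ᵥ z = 0 := by
        rw [e1, e2, nrm2_le_iff'] at hpr
        rw [add_dotProduct, dotProduct_add, dotProduct_add] at hpr
        have hcm : (Bhalf *ᵥ z) ⬝ᵥ a = 0 := by rw [dotProduct_comm]; exact horth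
        have hnn : 0 ≤ (Bhalf *ᵥ z) ⬝ᵥ (Bhalf *ᵥ z) :=
          Finset.sum_nonneg fun i _ => mul_self_nonneg _
        have hzz : (Bhalf *ᵥ z) ⬝ᵥ (Bhalf *ᵥ z) = 0 := by
          rw [ha] at hpr horth hcm
          linarith
        have : nrm2 (Bhalf *ᵥ z) = 0 := by
          have h2 := nrm2_sq' (Bhalf *ᵥ z)
          rw [hzz] at h2
          exact pow_eq_zero_iff (by norm_num) |>.mp h2
        exact nrm2_zero_iff'.mp this
      show Bhalf *ᵥ (x 0 - xstar) ∈ rowSpace M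
      rw [e1, hHz, add_zero, ha, ← hMT]
      exact mem_rowSpace M u
    | succ i ih =>
      obtain ⟨P, _, _, ⟨W, hPW⟩, hrec⟩ := hstep i
      rw [hrec, hPW, ← Matrix.mulVec_mulVec]
      exact Submodule.sub_mem _ ih (mem_rowSpace M _)
  -- main estimates
  have hlamR : (0 : ℝ) < (lam : ℝ) := by exact_mod_cast Nat.lt_of_lt_of_le Nat.zero_lt_one hlam
  have hcard : (Finset.Icc (k + 1 - lam) k).card = lam := by
    rw [Nat.card_Icc]; omega
  have hsetlb : ∀ c ∈ {c | ∃ v ∈ rowSpace M, v ≠ 0 ∧ c = nrm2 (M *ᵥ v) / nrm2 v}, (0:ℝ) ≤ c := by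
    rintro c ⟨v, _, _, rfl⟩
    exact div_nonneg (nrm2_nonneg _) (nrm2_nonneg _)
  constructor
  · rw [hyk k]
    by_cases hy0 : y k = 0
    · rw [hy0, nrm2_zero_iff'.mpr rfl]
      have : sigmaMinPos M ^ 4 * (0:ℝ) ^ 4 = 0 := by norm_num
      rw [this]
      exact mul_nonneg (by positivity)
        (Finset.sum_nonneg fun i _ => pow_nonneg (nrm2_nonneg _) 4)
    · have hykpos : 0 < nrm2 (y k) := lt_of_le_of_ne (nrm2_nonneg _)
        fun h => hy0 (nrm2_zero_iff'.mp h.symm)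
      have hσmem : nrm2 (M *ᵥ y k) / nrm2 (y k)
          ∈ {c | ∃ v ∈ rowSpace M, v ≠ 0 ∧ c = nrm2 (M *ᵥ v) / nrm2 v} :=
        ⟨y k, hmem k, hy0, rfl⟩
      have hσnn : 0 ≤ sigmaMinPos M := le_csInf ⟨_, hσmem⟩ hsetlb
      have key : ∀ i ∈ Finset.Icc (k + 1 - lam) k,
          (sigmaMinPos M * nrm2 (y k)) ^ 4 ≤ nrm2 (A *ᵥ x i - b) ^ 4 := by
        intro i hi
        obtain ⟨hi1, hi2⟩ := Finset.mem_Icc.mp hi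
        have hyi : nrm2 (y k) ≤ nrm2 (y i) := hmono i k hi2
        have hyipos : 0 < nrm2 (y i) := lt_of_lt_of_le hykpos hyi
        have hyine : y i ≠ 0 := fun h => by
          rw [h, nrm2_zero_iff'.mpr rfl] at hyipos; exact lt_irrefl _ hyipos
        have hile : sigmaMinPos M ≤ nrm2 (M *ᵥ y i) / nrm2 (y i) :=
          csInf_le ⟨0, hsetlb⟩ ⟨y i, hmem i, hyine, rfl⟩
        have h1 : sigmaMinPos M * nrm2 (y i) ≤ nrm2 (M *ᵥ y i) :=
          (le_div_iff₀ hyipos).mp hile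
        have h2 : sigmaMinPos M * nrm2 (y k) ≤ nrm2 (M *ᵥ y i) :=
          le_trans (mul_le_mul_of_nonneg_left hyi hσnn) h1
        rw [hres i]
        exact pow_le_pow_left₀ (by positivity) h2 4
      have hsum : (lam : ℝ) * (sigmaMinPos M * nrm2 (y k)) ^ 4
          ≤ ∑ i ∈ Finset.Icc (k + 1 - lam) k, nrm2 (A *ᵥ x i - b) ^ 4 := by
        have := Finset.card_nsmul_le_sum (Finset.Icc (k + 1 - lam) k)
          (fun i => nrm2 (A *ᵥ x i - b) ^ 4) _ key
        rwa [hcard, nsmul_eq_mul] at this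
      calc sigmaMinPos M ^ 4 * nrm2 (y k) ^ 4 = (sigmaMinPos M * nrm2 (y k)) ^ 4 :=
            (mul_pow _ _ _).symm
        _ = (1 / (lam : ℝ)) * ((lam : ℝ) * (sigmaMinPos M * nrm2 (y k)) ^ 4) := by
            field_simp
        _ ≤ (1 / (lam : ℝ)) * ∑ i ∈ Finset.Icc (k + 1 - lam) k, nrm2 (A *ᵥ x i - b) ^ 4 :=
            mul_le_mul_of_nonneg_left hsum (by positivity)
  · rw [hyk (k + 1 - lam)]
    have key2 : ∀ i ∈ Finset.Icc (k + 1 - lam) k,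
        nrm2 (A *ᵥ x i - b) ^ 4 ≤ (specNorm M * nrm2 (y (k + 1 - lam))) ^ 4 := by
      intro i hi
      obtain ⟨hi1, _⟩ := Finset.mem_Icc.mp hi
      have h1 : nrm2 (M *ᵥ y i) ≤ specNorm M * nrm2 (y (k + 1 - lam)) :=
        (specNorm_bound M (y i)).trans
          (mul_le_mul_of_nonneg_left (hmono _ _ hi1) (specNorm_nonneg M))
      rw [hres i]
      exact pow_le_pow_left₀ (nrm2_nonneg _) h1 4
    have hsum2 : ∑ i ∈ Finset.Icc (k + 1 - lam) k, nrm2 (A *ᵥ x i - b) ^ 4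
        ≤ (lam : ℝ) * (specNorm M * nrm2 (y (k + 1 - lam))) ^ 4 := by
      have := Finset.sum_le_card_nsmul (Finset.Icc (k + 1 - lam) k)
        (fun i => nrm2 (A *ᵥ x i - b) ^ 4) _ key2
      rwa [hcard, nsmul_eq_mul] at this
    calc (1 / (lam : ℝ)) * ∑ i ∈ Finset.Icc (k + 1 - lam) k, nrm2 (A *ᵥ x i - b) ^ 4
        ≤ (1 / (lam : ℝ)) * ((lam : ℝ) * (specNorm M * nrm2 (y (k + 1 - lam))) ^ 4) :=
          mul_le_mul_of_nonneg_left hsum2 (by positivity)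
      _ = (specNorm M * nrm2 (y (k + 1 - lam))) ^ 4 := by field_simp

end
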